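/- For every real number x ≥ 0, S(x) = 2·(S(x/p) + S(x/q) − S(x/(pq))) + 1 − W*(⌊x⌋). -/

import Mathlib

/-- A strictly chained `(p,q)`-ary partition of `U`: a finite strictly decreasing
list of positive integers of the form `p^a * q^b`, each part divisible by the next,
summing to `U`. -/
def IsSCPartition (p q U : ℕ) (l : List ℕ) : Prop :=
  (∀ x ∈ l, ∃ a b : ℕ, x = p ^ a * q ^ b) ∧
  List.Chain' (fun x y => y ∣ x ∧ y < x) l ∧
  l.sum = U

/-- The set of strictly chained `(p,q)`-ary partitions of `U`. -/
def Omega (p q U : ℕ) : Set (List ℕ) := {l | IsSCPartition p q U l}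

/-- The subset of `Omega p q U` of partitions with no part equal to `1`. -/
def OmegaStar (p q U : ℕ) : Set (List ℕ) := {l | IsSCPartition p q U l ∧ 1 ∉ l}

/-- `W p q U` is the number of strictly chained `(p,q)`-ary partitions of `U`. -/
noncomputable def W (p q U : ℕ) : ℕ := (Omega p q U).ncard

/-- `Wstar p q U` is the number of strictly chained `(p,q)`-ary partitions of `U`
with no part equal to `1`. -/
noncomputable def Wstar (p q U : ℕ) : ℕ := (OmegaStar p q U).ncard

/-- `S p q x = Σ_{U=1}^{⌊x⌋} W p q U`. -/
noncomputable def S (p q : ℕ) (x : ℝ) : ℕ := ∑ U ∈ Finset.Icc 1 ⌊x⌋₊, W p q U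

namespace SCRec

/-- `D p q m U` counts the partitions in `Omega p q U` all of whose parts are
divisible by `m`. -/
noncomputable def D (p q m U : ℕ) : ℕ :=
  {l | IsSCPartition p q U l ∧ ∀ x ∈ l, m ∣ x}.ncard

instance : IsTrans ℕ (fun x y => y ∣ x ∧ y < x) :=
  ⟨fun _ _ _ hab hbc => ⟨hbc.1.trans hab.1, hbc.2.trans hab.2⟩⟩

lemma chainR_pairwise {l : List ℕ}
    (h : List.Chain' (fun x y => y ∣ x ∧ y < x) l) :
    l.Pairwise (fun x y => y ∣ x ∧ y < x) :=
  List.isChain_iff_pairwise.mp h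

lemma part_pos {p q x : ℕ} (hp : 0 < p) (hq : 0 < q)
    (h : ∃ a b : ℕ, x = p ^ a * q ^ b) : 0 < x := by
  obtain ⟨a, b, rfl⟩ := h
  exact Nat.mul_pos (Nat.pow_pos (n := a) hp) (Nat.pow_pos (n := b) hq)

lemma mem_pos {p q U x : ℕ} {l : List ℕ} (hp : 0 < p) (hq : 0 < q)
    (hl : IsSCPartition p q U l) (hx : x ∈ l) : 0 < x :=
  part_pos hp hq (hl.1 x hx)

lemma sorted_gt {p q U : ℕ} {l : List ℕ} (hl : IsSCPartition p q U l) :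
    l.Pairwise (· > ·) :=
  (chainR_pairwise hl.2.1).imp (fun h => h.2)

lemma omega_finite {p q : ℕ} (hp : 0 < p) (hq : 0 < q) (U : ℕ) :
    (Omega p q U).Finite := by
  apply Set.Finite.of_finite_image (f := List.toFinset)
  · apply Set.Finite.subset ((Finset.range (U + 1)).powerset : Finset (Finset ℕ)).finite_toSet
    rintro s ⟨l, hl, rfl⟩
    simp only [Finset.coe_powerset, Set.mem_preimage, Set.mem_powerset_iff,
      Finset.coe_range]
    intro x hx
    simp only [List.coe_toFinset, Set.mem_setOf_eq] at hx
    have : x ≤ l.sum := List.le_sum_of_mem hx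
    rw [hl.2.2] at this
    simp only [Set.mem_Iio]
    omega
  · intro l₁ h₁ l₂ h₂ he
    have s₁ := sorted_gt h₁
    have s₂ := sorted_gt h₂
    have n₁ : l₁.Nodup := s₁.imp (fun h => ne_of_gt h)
    have n₂ : l₂.Nodup := s₂.imp (fun h => ne_of_gt h)
    exact List.Perm.eq_of_pairwise (fun a b _ _ h1 h2 => absurd h1 (lt_asymm h2)) s₁ s₂ (List.perm_of_nodup_nodup_toFinset_eq n₁ n₂ he)

lemma omegaStar_finite {p q : ℕ} (hp : 0 < p) (hq : 0 < q) (U : ℕ) :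
    (OmegaStar p q U).Finite :=
  (omega_finite hp hq U).subset (fun _ h => h.1)

lemma wstar_zero {p q : ℕ} (hp : 0 < p) (hq : 0 < q) : Wstar p q 0 = 1 := by
  have : OmegaStar p q 0 = {([] : List ℕ)} := by
    ext l
    constructor
    · rintro ⟨⟨hf, _, hs⟩, -⟩
      rcases l with _ | ⟨a, l⟩
      · rfl
      · exfalso
        have ha : 0 < a := part_pos hp hq (hf a (by simp))
        simp only [List.sum_cons] at hs
        omega
    · rintro rfl
      exact ⟨⟨by simp, List.isChain_nil, by simp⟩, by simp⟩
  rw [Wstar, this, Set.ncard_singleton]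

lemma last_eq_one {p q U : ℕ} {l : List ℕ} (hp : 0 < p) (hq : 0 < q)
    (hl : IsSCPartition p q U l) (h1 : 1 ∈ l) (hne : l ≠ []) :
    l.getLast hne = 1 := by
  set m := l.getLast hne with hm
  have hsplit : l.dropLast ++ [m] = l := List.dropLast_append_getLast hne
  have hpw := chainR_pairwise hl.2.1
  rw [← hsplit, List.pairwise_append] at hpw
  by_contra hne1
  have h1d : 1 ∈ l.dropLast := by
    rw [← hsplit] at h1
    rcases List.mem_append.mp h1 with h | h
    · exact h
    · simp only [List.mem_singleton] at h
      exact absurd h.symm hne1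
  have := (hpw.2.2 1 h1d m (by simp)).2
  have hmpos : 0 < m := mem_pos hp hq hl (l.getLast_mem hne)
  omega

lemma key1 {p q : ℕ} (hp : 1 < p) (hq : 1 < q) {U : ℕ} (hU : 0 < U) :
    W p q U = Wstar p q U + Wstar p q (U - 1) := by
  have hp0 : 0 < p := by omega
  have hq0 : 0 < q := by omega
  have hsplit : Omega p q U = OmegaStar p q U ∪ {l | IsSCPartition p q U l ∧ 1 ∈ l} := by
    ext l
    simp only [Omega, OmegaStar, Set.mem_setOf_eq, Set.mem_union]
    by_cases h : 1 ∈ l <;> tauto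
  have hdisj : Disjoint (OmegaStar p q U) {l | IsSCPartition p q U l ∧ 1 ∈ l} := by
    rw [Set.disjoint_left]
    rintro l ⟨-, h1⟩ ⟨-, h2⟩
    exact h1 h2
  have hfin1 := omegaStar_finite hp0 hq0 (p := p) (q := q) U
  have hfin2 : ({l | IsSCPartition p q U l ∧ 1 ∈ l} : Set (List ℕ)).Finite :=
    (omega_finite hp0 hq0 U).subset (fun _ h => h.1)
  have hcard : W p q U = Wstar p q U + ({l | IsSCPartition p q U l ∧ 1 ∈ l}).ncard := by
    rw [W, hsplit, Set.ncard_union_eq hdisj hfin1 hfin2]; rfl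
  rw [hcard]
  congr 1
  have himg : {l | IsSCPartition p q U l ∧ 1 ∈ l} =
      (fun l : List ℕ => l ++ [1]) '' OmegaStar p q (U - 1) := by
    ext l
    constructor
    · rintro ⟨hl, h1⟩
      have hne : l ≠ [] := by rintro rfl; simp at h1
      have hlast := last_eq_one hp0 hq0 hl h1 hne
      have hsp : l.dropLast ++ [(1 : ℕ)] = l := by
        conv_rhs => rw [← List.dropLast_append_getLast hne, hlast]
      have hpw := chainR_pairwise hl.2.1
      rw [← hsp, List.pairwise_append] at hpw
      refine ⟨l.dropLast, ⟨⟨?_, ?_, ?_⟩, ?_⟩, hsp⟩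
      · exact fun x hx => hl.1 x (List.mem_of_mem_dropLast hx)
      · exact hl.2.1.sublist (List.dropLast_sublist l)
      · have : l.sum = l.dropLast.sum + 1 := by
          conv_lhs => rw [← hsp]
          simp
        rw [hl.2.2] at this
        omega
      · intro hmem
        have := (hpw.2.2 1 hmem 1 (by simp)).2
        omega
    · rintro ⟨l', ⟨⟨hf, hc, hs⟩, h1'⟩, rfl⟩
      have hmemgt : ∀ x ∈ l', 1 < x := by
        intro x hx
        have hpos : 0 < x := part_pos hp0 hq0 (hf x hx)
        have : x ≠ 1 := fun h => h1' (h ▸ hx)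
        omega
      refine ⟨⟨?_, ?_, ?_⟩, by simp⟩
      · intro x hx
        rcases List.mem_append.mp hx with h | h
        · exact hf x h
        · simp only [List.mem_singleton] at h
          exact ⟨0, 0, by simp [h]⟩
      · show List.IsChain _ (l' ++ [1])
        rw [List.isChain_append]
        refine ⟨hc, by simp, ?_⟩
        intro x hx y hy
        simp only [List.head?_cons, Option.mem_def, Option.some.injEq] at hy
        have hxl : x ∈ l' := List.mem_of_mem_getLast? hx
        exact ⟨by simp [← hy], by rw [← hy]; exact hmemgt x hxl⟩
      · simp only [List.sum_append, List.sum_singleton, hs]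
        omega
  rw [himg, Set.ncard_image_of_injOn (fun a _ b _ h => List.append_cancel_right h)]
  rfl

lemma pow_le_of_dvd {p : ℕ} (hp : 1 < p) {α a : ℕ} (h : p ^ α ∣ p ^ a) : α ≤ a :=
  (pow_dvd_pow_iff (by omega) (by simp [Nat.isUnit_iff]; omega)).mp h

lemma dvd_part_exponents {p q α β a b : ℕ} (hp : 1 < p) (hq : 1 < q)
    (hpq : Nat.Coprime p q) (h : p ^ α * q ^ β ∣ p ^ a * q ^ b) :
    α ≤ a ∧ β ≤ b := by
  constructor
  · have h1 : p ^ α ∣ p ^ a * q ^ b := (dvd_mul_right _ _).trans h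
    have hc : (p ^ α).Coprime (q ^ b) := Nat.Coprime.pow α b hpq
    exact pow_le_of_dvd hp (hc.dvd_of_dvd_mul_right h1)
  · have h1 : q ^ β ∣ p ^ a * q ^ b := (dvd_mul_left _ _).trans h
    have hc : (q ^ β).Coprime (p ^ a) := Nat.Coprime.pow β a hpq.symm
    rw [mul_comm] at h1
    exact pow_le_of_dvd hq (hc.dvd_of_dvd_mul_right h1)

lemma sum_map_mul (m : ℕ) (l : List ℕ) :
    (l.map (fun y => m * y)).sum = m * l.sum := by
  induction l with
  | nil => simp
  | cons a l ih => simp [ih, Nat.mul_add]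

lemma scale_dvd {p q α β U : ℕ} (hp : 1 < p) (hq : 1 < q) (hpq : Nat.Coprime p q)
    (hm : p ^ α * q ^ β ∣ U) :
    D p q (p ^ α * q ^ β) U = W p q (U / (p ^ α * q ^ β)) := by
  set m := p ^ α * q ^ β with hmdef
  have hm0 : 0 < m := part_pos (by omega) (by omega) ⟨α, β, rfl⟩
  have himg : {l | IsSCPartition p q U l ∧ ∀ x ∈ l, m ∣ x} =
      (List.map (fun y => m * y)) '' Omega p q (U / m) := by
    ext l
    constructor
    · rintro ⟨⟨hf, hc, hs⟩, hd⟩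
      have hmap : (l.map (· / m)).map (fun y => m * y) = l := by
        rw [List.map_map]
        conv_rhs => rw [← List.map_id l]
        exact List.map_congr_left (fun x hx => Nat.mul_div_cancel' (hd x hx))
      refine ⟨l.map (· / m), ⟨?_, ?_, ?_⟩, hmap⟩
      · intro x hx
        obtain ⟨y, hy, rfl⟩ := List.mem_map.mp hx
        obtain ⟨a, b, rfl⟩ := hf y hy
        obtain ⟨ha, hb⟩ := dvd_part_exponents hp hq hpq (hmdef ▸ hd _ hy)
        refine ⟨a - α, b - β, ?_⟩
        have hy' : p ^ a * q ^ b = m * (p ^ (a - α) * q ^ (b - β)) := by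
          rw [hmdef, mul_mul_mul_comm, ← pow_add, ← pow_add]
          congr 2 <;> omega
        rw [hy', Nat.mul_div_cancel_left _ hm0]
      · have hcm : List.Chain' (fun x y => y ∣ x ∧ y < x)
            ((l.map (· / m)).map (fun y => m * y)) := by
          rw [hmap]; exact hc
        have hc' := (List.isChain_map (fun y => m * y)).mp hcm
        exact hc'.imp (fun a b h =>
          ⟨(Nat.mul_dvd_mul_iff_left hm0).mp h.1,
           Nat.lt_of_mul_lt_mul_left h.2⟩)
      · have hsum : m * (l.map (· / m)).sum = U := by
          rw [← sum_map_mul m (l.map (· / m)), hmap, hs]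
        rw [← hsum, Nat.mul_div_cancel_left _ hm0]
    · rintro ⟨l', ⟨hf, hc, hs⟩, rfl⟩
      refine ⟨⟨?_, ?_, ?_⟩, ?_⟩
      · intro x hx
        obtain ⟨y, hy, rfl⟩ := List.mem_map.mp hx
        obtain ⟨a, b, rfl⟩ := hf y hy
        exact ⟨α + a, β + b, by rw [hmdef, mul_mul_mul_comm, ← pow_add, ← pow_add]⟩
      · show List.IsChain _ _
        rw [List.isChain_map]
        exact hc.imp (fun a b h => ⟨mul_dvd_mul_left m h.1,
          mul_lt_mul_of_pos_left h.2 hm0⟩)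
      · rw [sum_map_mul m l', hs, Nat.mul_div_cancel' hm]
      · intro x hx
        obtain ⟨y, _, rfl⟩ := List.mem_map.mp hx
        exact dvd_mul_right m y
  have hinj : Set.InjOn (List.map (fun y => m * y)) (Omega p q (U / m)) :=
    fun a _ b _ h => List.map_injective_iff.mpr
      (fun x y hxy => Nat.eq_of_mul_eq_mul_left hm0 hxy) h
  rw [D, himg, Set.ncard_image_of_injOn hinj]
  rfl

lemma scale_not_dvd {p q m U : ℕ} (hm : ¬ m ∣ U) : D p q m U = 0 := by
  have : {l | IsSCPartition p q U l ∧ ∀ x ∈ l, m ∣ x} = ∅ := by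
    ext l
    simp only [Set.mem_setOf_eq, Set.mem_empty_iff_false, iff_false]
    rintro ⟨⟨-, -, hs⟩, hd⟩
    exact hm (hs ▸ List.dvd_sum hd)
  rw [D, this, Set.ncard_empty]

lemma D_eq {p q α β U : ℕ} (hp : 1 < p) (hq : 1 < q) (hpq : Nat.Coprime p q) :
    D p q (p ^ α * q ^ β) U =
      if p ^ α * q ^ β ∣ U then W p q (U / (p ^ α * q ^ β)) else 0 := by
  split_ifs with h
  · exact scale_dvd hp hq hpq h
  · exact scale_not_dvd h

lemma key2 {p q : ℕ} (hp : 1 < p) (hq : 1 < q) (hpq : Nat.Coprime p q)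
    {U : ℕ} (hU : 0 < U) :
    Wstar p q U + D p q (p * q) U = D p q p U + D p q q U := by
  have hp0 : 0 < p := by omega
  have hq0 : 0 < q := by omega
  set A : Set (List ℕ) := {l | IsSCPartition p q U l ∧ ∀ x ∈ l, p ∣ x} with hA
  set B : Set (List ℕ) := {l | IsSCPartition p q U l ∧ ∀ x ∈ l, q ∣ x} with hB
  have hfinA : A.Finite := (omega_finite hp0 hq0 U).subset (fun _ h => h.1)
  have hfinB : B.Finite := (omega_finite hp0 hq0 U).subset (fun _ h => h.1)
  have hunion : A ∪ B = OmegaStar p q U := by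
    ext l
    constructor
    · rintro (⟨hl, hd⟩ | ⟨hl, hd⟩) <;>
      · refine ⟨hl, fun h1 => ?_⟩
        have := hd 1 h1
        have := Nat.le_of_dvd one_pos this
        omega
    · rintro ⟨hl, h1⟩
      have hne : l ≠ [] := by
        rintro rfl
        have := hl.2.2
        simp at this
        omega
      set m := l.getLast hne with hmdef
      have hmem : m ∈ l := l.getLast_mem hne
      have hsp : l.dropLast ++ [m] = l := List.dropLast_append_getLast hne
      have hpw := chainR_pairwise hl.2.1
      rw [← hsp, List.pairwise_append] at hpw
      have hdall : ∀ x ∈ l, m ∣ x := by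
        intro x hx
        rw [← hsp] at hx
        rcases List.mem_append.mp hx with h | h
        · exact (hpw.2.2 x h m (by simp)).1
        · simp only [List.mem_singleton] at h
          exact h ▸ dvd_rfl
      obtain ⟨a, b, hab⟩ := hl.1 m hmem
      have hm1 : m ≠ 1 := fun h => h1 (h ▸ hmem)
      have hab' : a ≠ 0 ∨ b ≠ 0 := by
        by_contra hcon
        push_neg at hcon
        rw [hcon.1, hcon.2] at hab
        simp at hab
        exact hm1 hab
      rcases hab' with ha | hb
      · left
        refine ⟨hl, fun x hx => dvd_trans ?_ (hdall x hx)⟩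
        rw [hab]
        exact dvd_trans (dvd_pow_self p ha) (dvd_mul_right _ _)
      · right
        refine ⟨hl, fun x hx => dvd_trans ?_ (hdall x hx)⟩
        rw [hab]
        exact dvd_trans (dvd_pow_self q hb) (dvd_mul_left _ _)
  have hinter : A ∩ B = {l | IsSCPartition p q U l ∧ ∀ x ∈ l, p * q ∣ x} := by
    ext l
    constructor
    · rintro ⟨⟨hl, hdp⟩, ⟨-, hdq⟩⟩
      exact ⟨hl, fun x hx => hpq.mul_dvd_of_dvd_of_dvd (hdp x hx) (hdq x hx)⟩
    · rintro ⟨hl, hd⟩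
      exact ⟨⟨hl, fun x hx => (dvd_mul_right p q).trans (hd x hx)⟩,
             ⟨hl, fun x hx => (dvd_mul_left q p).trans (hd x hx)⟩⟩
  have := Set.ncard_union_add_ncard_inter A B hfinA hfinB
  rw [hunion, hinter] at this
  rw [Wstar, D, D, D]
  rw [this]

lemma sum_shift (g : ℕ → ℤ) (n : ℕ) :
    ∑ U ∈ Finset.Icc 1 n, g (U - 1) =
      ∑ U ∈ Finset.Icc 1 n, g U + g 0 - g n := by
  induction n with
  | zero => simp
  | succ n ih =>
    rw [Finset.sum_Icc_succ_top (by omega : 1 ≤ n + 1),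
        Finset.sum_Icc_succ_top (by omega : 1 ≤ n + 1), ih]
    simp only [Nat.add_sub_cancel]
    ring

lemma sum_dvd (f : ℕ → ℤ) (m n : ℕ) (hm : 0 < m) :
    ∑ U ∈ Finset.Icc 1 n, (if m ∣ U then f (U / m) else 0) =
      ∑ V ∈ Finset.Icc 1 (n / m), f V := by
  rw [← Finset.sum_filter]
  refine Finset.sum_nbij' (fun U => U / m) (fun V => m * V) ?_ ?_ ?_ ?_ ?_
  · intro a ha
    simp only [Finset.mem_filter, Finset.mem_Icc] at ha
    obtain ⟨⟨h1, h2⟩, hd⟩ := ha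
    simp only [Finset.mem_Icc]
    refine ⟨?_, Nat.div_le_div_right h2⟩
    rw [Nat.one_le_div_iff hm]
    exact Nat.le_of_dvd (by omega) hd
  · intro b hb
    simp only [Finset.mem_Icc] at hb
    simp only [Finset.mem_filter, Finset.mem_Icc]
    have h2 : b * m ≤ n := (Nat.le_div_iff_mul_le hm).mp hb.2
    refine ⟨⟨Nat.mul_pos hm (by omega), by rw [mul_comm]; exact h2⟩, dvd_mul_right m b⟩
  · intro a ha
    simp only [Finset.mem_filter] at ha
    exact Nat.mul_div_cancel' ha.2
  · intro b _
    exact Nat.mul_div_cancel_left b hm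
  · intro a _
    rfl

end SCRec

theorem S_recursion (p q : ℕ) (hp : 1 < p) (hq : 1 < q) (hpq : Nat.Coprime p q)
    (x : ℝ) (hx : 0 ≤ x) :
    (S p q x : ℤ) =
      2 * ((S p q (x / p) : ℤ) + (S p q (x / q) : ℤ) - (S p q (x / (p * q)) : ℤ))
        + 1 - (Wstar p q ⌊x⌋₊ : ℤ) := by
  classical
  have hp0 : 0 < p := by omega
  have hq0 : 0 < q := by omega
  set n := ⌊x⌋₊ with hn
  -- floors
  have hfp : ⌊x / (p : ℝ)⌋₊ = n / p := Nat.floor_div_natCast x p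
  have hfq : ⌊x / (q : ℝ)⌋₊ = n / q := Nat.floor_div_natCast x q
  have hfpq : ⌊x / ((p : ℝ) * q)⌋₊ = n / (p * q) := by
    have : ((p : ℝ) * q) = ((p * q : ℕ) : ℝ) := by push_cast; ring
    rw [this, Nat.floor_div_natCast x (p * q)]
  -- express S's as sums
  have hSx : (S p q x : ℤ) = ∑ U ∈ Finset.Icc 1 n, (W p q U : ℤ) := by
    rw [S, ← hn]; push_cast; rfl
  have hSp : (S p q (x / p) : ℤ) = ∑ U ∈ Finset.Icc 1 (n / p), (W p q U : ℤ) := by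
    rw [S, hfp]; push_cast; rfl
  have hSq : (S p q (x / q) : ℤ) = ∑ U ∈ Finset.Icc 1 (n / q), (W p q U : ℤ) := by
    rw [S, hfq]; push_cast; rfl
  have hSpq : (S p q (x / (p * q)) : ℤ) =
      ∑ U ∈ Finset.Icc 1 (n / (p * q)), (W p q U : ℤ) := by
    rw [S, hfpq]; push_cast; rfl
  -- step 1 : W U = Wstar U + Wstar (U-1)
  have step1 : ∑ U ∈ Finset.Icc 1 n, (W p q U : ℤ) =
      ∑ U ∈ Finset.Icc 1 n, (Wstar p q U : ℤ) +
      ∑ U ∈ Finset.Icc 1 n, (Wstar p q (U - 1) : ℤ) := by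
    rw [← Finset.sum_add_distrib]
    apply Finset.sum_congr rfl
    intro U hU
    simp only [Finset.mem_Icc] at hU
    rw [SCRec.key1 hp hq (by omega : 0 < U)]
    push_cast
    ring
  -- step 2 : shift
  have step2 : ∑ U ∈ Finset.Icc 1 n, (Wstar p q (U - 1) : ℤ) =
      ∑ U ∈ Finset.Icc 1 n, (Wstar p q U : ℤ) + 1 - (Wstar p q n : ℤ) := by
    have := SCRec.sum_shift (fun U => (Wstar p q U : ℤ)) n
    rw [this, SCRec.wstar_zero hp0 hq0]
    push_cast
    ring
  -- step 3 : inclusion-exclusion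
  have step3 : ∑ U ∈ Finset.Icc 1 n, (Wstar p q U : ℤ) =
      (∑ U ∈ Finset.Icc 1 (n / p), (W p q U : ℤ)) +
      (∑ U ∈ Finset.Icc 1 (n / q), (W p q U : ℤ)) -
      (∑ U ∈ Finset.Icc 1 (n / (p * q)), (W p q U : ℤ)) := by
    have hDe : ∀ U ∈ Finset.Icc 1 n, (Wstar p q U : ℤ) =
        (if p ∣ U then (W p q (U / p) : ℤ) else 0) +
        (if q ∣ U then (W p q (U / q) : ℤ) else 0) -
        (if p * q ∣ U then (W p q (U / (p * q)) : ℤ) else 0) := by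
      intro U hU
      simp only [Finset.mem_Icc] at hU
      have hk := SCRec.key2 hp hq hpq (by omega : 0 < U)
      have hDp : SCRec.D p q p U = if p ∣ U then W p q (U / p) else 0 := by
        have := SCRec.D_eq (α := 1) (β := 0) (U := U) hp hq hpq
        simpa using this
      have hDq : SCRec.D p q q U = if q ∣ U then W p q (U / q) else 0 := by
        have := SCRec.D_eq (α := 0) (β := 1) (U := U) hp hq hpq
        simpa using this
      have hDpq : SCRec.D p q (p * q) U = if p * q ∣ U then W p q (U / (p * q)) else 0 := by
        have := SCRec.D_eq (α := 1) (β := 1) (U := U) hp hq hpq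
        simpa using this
      rw [hDp, hDq, hDpq] at hk
      have : (Wstar p q U : ℤ) + (if p * q ∣ U then (W p q (U / (p * q)) : ℤ) else 0) =
          (if p ∣ U then (W p q (U / p) : ℤ) else 0) +
          (if q ∣ U then (W p q (U / q) : ℤ) else 0) := by
        have := congrArg (fun k : ℕ => (k : ℤ)) hk
        push_cast at this
        split_ifs at this ⊢ <;> push_cast at this ⊢ <;> linarith
      linarith
    rw [Finset.sum_congr rfl hDe, Finset.sum_sub_distrib, Finset.sum_add_distrib,
        SCRec.sum_dvd (fun V => (W p q V : ℤ)) p n hp0,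
        SCRec.sum_dvd (fun V => (W p q V : ℤ)) q n hq0,
        SCRec.sum_dvd (fun V => (W p q V : ℤ)) (p * q) n (by positivity)]
  rw [hSx, hSp, hSq, hSpq, step1, step2, step3]
  ring
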